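/- For any real z > 1 and integer w ≥ 2, (z^w - 1)^2 - w · z^(w-1) · (z - 1)^2 > 0. -/
import Mathlib

lemma aux_geom (z : ℝ) (hz : 1 < z) :
    ∀ w : ℕ, 1 ≤ w → z ^ w - 1 ≥ (z - 1) * (z ^ (w - 1) + (w - 1)) := by
  intro w hw
  induction w, hw using Nat.le_induction with
  | base => simp
  | succ n hn ih =>
    have hz0 : (0:ℝ) < z := by linarith
    have hne : z ^ n = z * z ^ (n - 1) := by
      nth_rewrite 1 [show n = (n-1) + 1 from (Nat.succ_pred_eq_of_pos hn).symm]
      ring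
    have h1 : (1:ℝ) ≤ z ^ (n - 1) := one_le_pow₀ (le_of_lt hz)
    have hcast : ((n + 1 : ℕ) : ℝ) - 1 = (n : ℝ) := by push_cast; ring
    have hn1 : (1:ℝ) ≤ (n : ℝ) := by exact_mod_cast hn
    simp only [Nat.add_sub_cancel, hcast]
    have : z ^ (n + 1) - 1 = z * (z ^ n - 1) + (z - 1) := by ring
    rw [this]
    nlinarith [ih, hne, mul_nonneg (le_of_lt (sub_pos.mpr hz)) (sub_nonneg.mpr hn1)]

theorem stmt_1 (z : ℝ) (hz : 1 < z) (w : ℕ) (hw : 2 ≤ w) :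
    (z ^ w - 1) ^ 2 - (w : ℝ) * z ^ (w - 1) * (z - 1) ^ 2 > 0 := by
  induction w, hw using Nat.le_induction with
  | base => norm_num; nlinarith [sq_nonneg (z - 1), sq_nonneg z]
  | succ n hn ih =>
    have hn1 : 1 ≤ n := le_trans (by norm_num) hn
    have hz0 : (0:ℝ) < z := by linarith
    have hne : z ^ n = z * z ^ (n - 1) := by
      nth_rewrite 1 [show n = (n-1) + 1 from (Nat.succ_pred_eq_of_pos hn1).symm]
      ring
    have h1 : (1:ℝ) ≤ z ^ (n - 1) := one_le_pow₀ (le_of_lt hz)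
    have haux := aux_geom z hz n hn1
    have hcast : ((n:ℝ)) - 1 ≥ 1 := by
      have : (2:ℝ) ≤ (n:ℝ) := by exact_mod_cast hn
      linarith
    simp only [Nat.add_sub_cancel]
    push_cast
    have hexp : z ^ (n + 1) = z * z ^ n := by ring
    rw [hexp]
    set a := z ^ (n - 1) with ha
    have hbn : z ^ n = z * a := hne
    rw [hbn] at haux ih ⊢
    have hpos : (0:ℝ) < (z - 1)^2 := by nlinarith
    nlinarith [mul_pos hz0 (mul_pos hz0 hpos), sq_nonneg (z*a - 1),
      mul_le_mul_of_nonneg_left haux (le_of_lt hz0),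
      mul_pos (mul_pos hz0 hz0) (sub_pos.mpr (lt_of_lt_of_le one_lt_two (by exact_mod_cast hn : (2:ℝ) ≤ n)))]
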